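/- arXiv:1510.01811 — 2 statements merged into one kernel-verified Lean document; each statement's English description precedes it below -/
import Mathlib

section
/- Let f_n : ℝ^p → ℝ be a sequence of convex functions converging pointwise to a convex function f : ℝ^p → ℝ that has a unique minimizer x* ∈ ℝ^p. If for each n the point x_n ∈ ℝ^p is a minimizer of f_n, then x_n → x* as n → ∞. -/
open Filter Topology

section Aux

lemma aux_abs_coord_le_norm {p : ℕ} (z : EuclideanSpace ℝ (Fin p)) (i : Fin p) :
    |z i| ≤ ‖z‖ := by
  have h := abs_real_inner_le_norm (EuclideanSpace.single i (1 : ℝ)) z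
  simpa [EuclideanSpace.inner_single_left, EuclideanSpace.norm_single] using h

lemma aux_mem_segment {E : Type*} [AddCommGroup E] [Module ℝ E] (c v : E) {T t : ℝ}
    (hT : 0 < T) (ht : |t| ≤ T) :
    c + t • v ∈ segment ℝ (c + (-T) • v) (c + T • v) := by
  obtain ⟨h1, h2⟩ := abs_le.1 ht
  refine ⟨(T - t) / (2 * T), (T + t) / (2 * T),
    div_nonneg (by linarith) (by linarith), div_nonneg (by linarith) (by linarith), ?_, ?_⟩
  · field_simp; ring
  · match_scalars <;> field_simp <;> ring

lemma aux_smul_single {p : ℕ} (i : Fin p) (t : ℝ) :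
    t • EuclideanSpace.single i (1 : ℝ) = EuclideanSpace.single i t := by
  ext j
  simp [EuclideanSpace.single_apply, mul_ite]

/-- A convex function is bounded on a ball by a bound on `2p` "cross-polytope" vertices. -/
lemma aux_convex_le_on_ball {p : ℕ} (hp : 0 < p) {f : EuclideanSpace ℝ (Fin p) → ℝ}
    (hf : ConvexOn ℝ Set.univ f) (c : EuclideanSpace ℝ (Fin p)) {R M : ℝ} (hR : 0 < R)
    (hM : ∀ i : Fin p, f (c + EuclideanSpace.single i ((p : ℝ) * R)) ≤ M ∧
      f (c + EuclideanSpace.single i (-((p : ℝ) * R))) ≤ M) :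
    ∀ z ∈ Metric.closedBall c R, f z ≤ M := by
  intro z hz
  have hp' : (0 : ℝ) < p := by exact_mod_cast hp
  have hzc : ∀ i, |z i - c i| ≤ R := by
    intro i
    have h1 : |(z - c) i| ≤ ‖z - c‖ := aux_abs_coord_le_norm _ i
    have h2 : ‖z - c‖ ≤ R := by rwa [Metric.mem_closedBall, dist_eq_norm] at hz
    simpa [PiLp.sub_apply] using h1.trans h2
  have hdecomp :
      z = ∑ i : Fin p, ((p : ℝ)⁻¹) • (c + EuclideanSpace.single i ((p : ℝ) * (z i - c i))) := by
    ext j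
    rw [show (∑ i : Fin p, ((p : ℝ)⁻¹) • (c + EuclideanSpace.single i ((p : ℝ) * (z i - c i)))) j
        = ∑ i : Fin p, (((p : ℝ)⁻¹) • (c + EuclideanSpace.single i ((p : ℝ) * (z i - c i)))) j
        from by rw [WithLp.ofLp_sum, Finset.sum_apply]]
    simp only [PiLp.add_apply, PiLp.smul_apply, EuclideanSpace.single_apply, smul_eq_mul,
      mul_add, Finset.sum_add_distrib, mul_ite, mul_zero]
    rw [Finset.sum_const, Finset.sum_ite_eq, Finset.card_univ, Fintype.card_fin]
    simp only [Finset.mem_univ, if_true, nsmul_eq_mul]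
    field_simp
    ring
  have hw : ∑ _i : Fin p, ((p : ℝ)⁻¹) = 1 := by
    rw [Finset.sum_const, Finset.card_univ, Fintype.card_fin, nsmul_eq_mul]
    field_simp
  have hterm : ∀ i : Fin p, f (c + EuclideanSpace.single i ((p : ℝ) * (z i - c i))) ≤ M := by
    intro i
    have hseg :
        c + ((p : ℝ) * (z i - c i)) • EuclideanSpace.single i (1 : ℝ) ∈
          segment ℝ (c + (-((p : ℝ) * R)) • EuclideanSpace.single i (1 : ℝ))
            (c + ((p : ℝ) * R) • EuclideanSpace.single i (1 : ℝ)) := by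
      refine aux_mem_segment c _ (by positivity) ?_
      rw [abs_mul, abs_of_pos hp']
      exact mul_le_mul_of_nonneg_left (hzc i) hp'.le
    rw [aux_smul_single, aux_smul_single, aux_smul_single] at hseg
    have := hf.le_on_segment (Set.mem_univ _) (Set.mem_univ _) hseg
    exact this.trans (max_le (hM i).2 (hM i).1)
  calc f z = f (∑ i : Fin p, ((p : ℝ)⁻¹) • (c + EuclideanSpace.single i ((p : ℝ) * (z i - c i)))) := by
        rw [← hdecomp]
    _ ≤ ∑ i : Fin p, ((p : ℝ)⁻¹) * f (c + EuclideanSpace.single i ((p : ℝ) * (z i - c i))) :=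
        hf.map_sum_le (fun _ _ => by positivity) hw (fun _ _ => Set.mem_univ _)
    _ ≤ ∑ _i : Fin p, ((p : ℝ)⁻¹) * M := by
        refine Finset.sum_le_sum fun i _ => ?_
        exact mul_le_mul_of_nonneg_left (hterm i) (by positivity)
    _ = M := by rw [← Finset.sum_mul, hw, one_mul]

/-- A convex function bounded by `C` on a ball of radius `2ε` is `2C/ε`-Lipschitz on the
ball of radius `ε`. -/
lemma aux_convex_lipschitz {E : Type*} [NormedAddCommGroup E] [NormedSpace ℝ E]
    {f : E → ℝ} (hf : ConvexOn ℝ Set.univ f) {c : E} {ε C : ℝ} (hε : 0 < ε)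
    (hC : ∀ u ∈ Metric.closedBall c (2 * ε), |f u| ≤ C)
    {z w : E} (hz : z ∈ Metric.closedBall c ε) (hw : w ∈ Metric.closedBall c ε) :
    f w ≤ f z + 2 * C / ε * ‖w - z‖ := by
  have hC0 : 0 ≤ C := (abs_nonneg _).trans (hC c (Metric.mem_closedBall_self (by positivity)))
  rcases eq_or_ne w z with rfl | hne
  · simp
  · set d := ‖w - z‖ with hd
    have hd0 : 0 < d := norm_pos_iff.2 (sub_ne_zero.2 hne)
    set u := w + (ε / d) • (w - z) with hu
    have hdε : 0 < d + ε := by positivity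
    have hucb : u ∈ Metric.closedBall c (2 * ε) := by
      rw [Metric.mem_closedBall, dist_eq_norm]
      have : u - c = (w - c) + (ε / d) • (w - z) := by rw [hu]; abel
      rw [this]
      calc ‖(w - c) + (ε / d) • (w - z)‖ ≤ ‖w - c‖ + ‖(ε / d) • (w - z)‖ := norm_add_le _ _
        _ = ‖w - c‖ + (ε / d) * d := by
            rw [norm_smul, Real.norm_of_nonneg (by positivity)]
        _ ≤ ε + ε := by
            rw [div_mul_cancel₀ _ hd0.ne']
            have := hw; rw [Metric.mem_closedBall, dist_eq_norm] at this
            linarith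
        _ = 2 * ε := by ring
    have hcomb : w = (1 - d / (d + ε)) • z + (d / (d + ε)) • u := by
      rw [hu]
      match_scalars <;> field_simp <;> ring
    have ht0 : 0 ≤ d / (d + ε) := by positivity
    have ht1 : d / (d + ε) ≤ 1 := by
      rw [div_le_one hdε]; linarith
    have hfw : f w ≤ (1 - d / (d + ε)) * f z + (d / (d + ε)) * f u := by
      nth_rewrite 1 [hcomb]
      exact hf.2 (Set.mem_univ _) (Set.mem_univ _) (by linarith) ht0 (by ring)
    have hfu : f u ≤ C := (le_abs_self _).trans (hC u hucb)
    have hfz : -C ≤ f z := by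
      have := hC z (Metric.closedBall_subset_closedBall (by linarith) hz)
      have := neg_abs_le (f z); linarith [abs_le.1 (hC z (Metric.closedBall_subset_closedBall (by linarith) hz))]
    have key : f w - f z ≤ (d / (d + ε)) * (2 * C) := by
      have : f w - f z ≤ (d / (d + ε)) * (f u - f z) := by nlinarith
      refine this.trans ?_
      have : f u - f z ≤ 2 * C := by linarith
      nlinarith
    have htle : d / (d + ε) ≤ d / ε := by
      apply div_le_div_of_nonneg_left hd0.le hε; linarith
    have : (d / (d + ε)) * (2 * C) ≤ 2 * C / ε * d := by
      rw [div_mul_eq_mul_div, div_mul_eq_mul_div, div_le_div_iff₀ hdε hε]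
      nlinarith [mul_nonneg (mul_nonneg hC0 hd0.le) hd0.le]
    linarith

end Aux

/-- If convex functions `f n : ℝ^p → ℝ` converge pointwise to a convex
function `g` with a unique minimizer `xstar`, and `x n` is a minimizer of `f n` for each `n`,
then `x n → xstar`. -/
theorem tendsto_argmin_of_convex_of_tendsto_pointwise
    {p : ℕ} (f : ℕ → EuclideanSpace ℝ (Fin p) → ℝ) (g : EuclideanSpace ℝ (Fin p) → ℝ)
    (hfconv : ∀ n, ConvexOn ℝ Set.univ (f n))
    (hgconv : ConvexOn ℝ Set.univ g)
    (hptwise : ∀ x, Tendsto (fun n => f n x) atTop (𝓝 (g x)))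
    (xstar : EuclideanSpace ℝ (Fin p))
    (hmin : ∀ y, g xstar ≤ g y)
    (huniq : ∀ x, (∀ y, g x ≤ g y) → x = xstar)
    (x : ℕ → EuclideanSpace ℝ (Fin p))
    (hxmin : ∀ n y, f n (x n) ≤ f n y) :
    Tendsto x atTop (𝓝 xstar) := by
  rcases Nat.eq_zero_or_pos p with hp0 | hp
  · subst hp0
    haveI : Subsingleton (EuclideanSpace ℝ (Fin 0)) :=
      ⟨fun a b => by ext j; exact absurd j.2 (by omega)⟩
    have : x = fun _ => xstar := funext fun n => Subsingleton.elim _ _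
    rw [this]; exact tendsto_const_nhds
  haveI : Nonempty (Fin p) := ⟨⟨0, hp⟩⟩
  haveI : Nontrivial (EuclideanSpace ℝ (Fin p)) := by
    refine ⟨EuclideanSpace.single ⟨0, hp⟩ (1 : ℝ), 0, ?_⟩
    intro h
    have := congrArg norm h
    simp [EuclideanSpace.norm_single] at this
  have hgcont : Continuous g := by
    rw [← continuousOn_univ]
    exact hgconv.continuousOn isOpen_univ
  rw [Metric.tendsto_atTop]
  intro ε hε
  set r : ℝ := ε / 2 with hrdef
  have hr : 0 < r := by positivity
  -- minimum of g on the sphere of radius r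
  have hScomp : IsCompact (Metric.sphere xstar r) := isCompact_sphere _ _
  have hSne : (Metric.sphere xstar r).Nonempty := NormedSpace.sphere_nonempty.2 hr.le
  obtain ⟨y0, hy0S, hy0min⟩ := hScomp.exists_isMinOn hSne hgcont.continuousOn
  set m : ℝ := g y0 with hmdef
  have hgap : g xstar < m := by
    rcases lt_or_ge (g xstar) m with h | h
    · exact h
    · exfalso
      have hy0glob : ∀ y, g y0 ≤ g y := fun y => le_trans (hmdef ▸ h) (hmin y)
      have : y0 = xstar := huniq y0 hy0glob
      rw [this] at hy0S
      simp [Metric.mem_sphere] at hy0S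
      linarith
  set gap : ℝ := m - g xstar with hgapdef
  have hgap0 : 0 < gap := by simp [hgapdef]; linarith
  -- uniform upper bound M on the ball of radius 2r, eventually in n
  set vert : Fin p × Bool → EuclideanSpace ℝ (Fin p) := fun ib =>
    xstar + EuclideanSpace.single ib.1 (if ib.2 then (p : ℝ) * (2 * r) else -((p : ℝ) * (2 * r)))
    with hvert
  set M : ℝ := 1 + ⨆ j : Fin p × Bool, g (vert j) with hMdef
  have hgvM : ∀ j, g (vert j) ≤ M - 1 := by
    intro j
    have : g (vert j) ≤ ⨆ j : Fin p × Bool, g (vert j) :=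
      le_ciSup (f := fun j => g (vert j)) (Set.Finite.bddAbove (Set.finite_range _)) j
    simp [hMdef]; linarith
  have hA : ∀ᶠ n in atTop, ∀ j : Fin p × Bool, f n (vert j) ≤ M :=
    eventually_all.2 fun j =>
      (hptwise (vert j)).eventually_le_const (by linarith [hgvM j])
  have hB : ∀ᶠ n in atTop, |f n xstar - g xstar| ≤ 1 := by
    have := (hptwise xstar).sub_const (g xstar)
    have h2 := this.norm
    simp only [sub_self, norm_zero] at h2
    exact h2.eventually_le_const one_pos
  -- uniform bound C on |f n| on the ball of radius 2r, eventually
  set C : ℝ := |M| + 2 * |g xstar| + 2 with hCdef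
  have hC0 : 0 < C := by positivity
  have hCbound : ∀ᶠ n in atTop, ∀ u ∈ Metric.closedBall xstar (2 * r), |f n u| ≤ C := by
    filter_upwards [hA, hB] with n hAn hBn
    intro u hu
    have hub : ∀ z ∈ Metric.closedBall xstar (2 * r), f n z ≤ M := by
      refine aux_convex_le_on_ball hp (hfconv n) xstar (by positivity) ?_
      intro i
      exact ⟨hAn (i, true), hAn (i, false)⟩
    have h1 : f n u ≤ M := hub u hu
    -- lower bound via reflection
    have hrefl : (2 : ℝ) • xstar - u ∈ Metric.closedBall xstar (2 * r) := by
      rw [Metric.mem_closedBall, dist_eq_norm] at hu ⊢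
      have : (2 : ℝ) • xstar - u - xstar = -(u - xstar) := by
        rw [two_smul]; abel
      rw [this, norm_neg]; exact hu
    have hmid : f n xstar ≤ (f n u + f n ((2 : ℝ) • xstar - u)) / 2 := by
      have hx : (1 / 2 : ℝ) • u + (1 / 2 : ℝ) • ((2 : ℝ) • xstar - u) = xstar := by
        rw [smul_sub, smul_smul]
        norm_num
      have hcv := (hfconv n).2 (Set.mem_univ u) (Set.mem_univ ((2 : ℝ) • xstar - u))
        (by norm_num : (0:ℝ) ≤ 1/2) (by norm_num : (0:ℝ) ≤ 1/2) (by norm_num)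
      rw [hx] at hcv
      simp only [smul_eq_mul] at hcv
      linarith
    have h2 : 2 * f n xstar - M ≤ f n u := by
      have := hub _ hrefl
      linarith
    have h3 : g xstar - 1 ≤ f n xstar := by
      have := abs_le.1 hBn; linarith [this.1]
    have hnab : -(|g xstar|) ≤ g xstar := neg_abs_le _
    have hgab : g xstar ≤ |g xstar| := le_abs_self _
    have hM' : M ≤ |M| := le_abs_self _
    rw [abs_le]
    constructor
    · simp only [hCdef]; linarith
    · simp only [hCdef]; linarith
  -- finite net on the sphere
  set δ : ℝ := gap * r / (8 * (C + 1)) with hδdef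
  have hδ0 : 0 < δ := by positivity
  have hcover : Metric.sphere xstar r ⊆
      ⋃ y : Metric.sphere xstar r, Metric.ball (y : EuclideanSpace ℝ (Fin p)) δ := by
    intro z hz
    exact Set.mem_iUnion.2 ⟨⟨z, hz⟩, Metric.mem_ball_self hδ0⟩
  obtain ⟨t, ht⟩ := hScomp.elim_finite_subcover
    (fun y : Metric.sphere xstar r => Metric.ball (y : EuclideanSpace ℝ (Fin p)) δ)
    (fun _ => Metric.isOpen_ball) hcover
  -- eventual lower bounds at net points, and upper bound at xstar
  have hCnet : ∀ᶠ n in atTop, ∀ y ∈ t, g ↑y - gap / 4 ≤ f n ↑y := by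
    rw [eventually_all_finset]
    intro y _
    exact (hptwise y).eventually_const_le (by linarith)
  have hD : ∀ᶠ n in atTop, f n xstar ≤ g xstar + gap / 4 :=
    (hptwise xstar).eventually_le_const (by linarith)
  have hfinal : ∀ᶠ n in atTop, dist (x n) xstar < ε := by
    filter_upwards [hA, hB, hCbound, hCnet, hD] with n hAn hBn hCb hCn hDn
    by_contra hcon
    push_neg at hcon
    have hd : r < dist (x n) xstar := by
      rw [hrdef]; linarith
    set d : ℝ := dist (x n) xstar with hddef
    have hd0 : 0 < d := lt_trans hr hd
    set z : EuclideanSpace ℝ (Fin p) := xstar + (r / d) • (x n - xstar) with hzdef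
    have hzS : z ∈ Metric.sphere xstar r := by
      rw [Metric.mem_sphere, dist_eq_norm]
      have : z - xstar = (r / d) • (x n - xstar) := by rw [hzdef, add_sub_cancel_left]
      rw [this, norm_smul, Real.norm_of_nonneg (by positivity)]
      rw [← dist_eq_norm, ← hddef, div_mul_cancel₀ _ hd0.ne']
    -- z is on the segment from xstar to x n
    have hzseg : z ∈ segment ℝ xstar (x n) := by
      refine ⟨1 - r / d, r / d, ?_, by positivity, by ring, ?_⟩
      · have : r / d ≤ 1 := by rw [div_le_one hd0]; linarith
        linarith
      · rw [hzdef, smul_sub, sub_smul, one_smul]; abel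
    have hup : f n z ≤ f n xstar := by
      have := (hfconv n).le_on_segment (Set.mem_univ _) (Set.mem_univ _) hzseg
      exact this.trans (max_le le_rfl (hxmin n xstar))
    -- lower bound on f n z via net
    obtain ⟨y, hyt, hzy⟩ : ∃ y ∈ t, z ∈ Metric.ball (y : EuclideanSpace ℝ (Fin p)) δ := by
      have := ht hzS
      simpa using this
    have hyS : (y : EuclideanSpace ℝ (Fin p)) ∈ Metric.sphere xstar r := y.2
    have hycb : (y : EuclideanSpace ℝ (Fin p)) ∈ Metric.closedBall xstar r :=
      Metric.sphere_subset_closedBall hyS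
    have hzcb : z ∈ Metric.closedBall xstar r := Metric.sphere_subset_closedBall hzS
    have hlip : f n z ≥ f n ↑y - 2 * C / r * ‖↑y - z‖ := by
      have := aux_convex_lipschitz (hfconv n) hr hCb hzcb hycb
      linarith
    have hnorm : ‖(y : EuclideanSpace ℝ (Fin p)) - z‖ ≤ δ := by
      rw [← dist_eq_norm]
      rw [Metric.mem_ball, dist_comm] at hzy
      linarith
    have hmy : m ≤ g ↑y := hy0min hyS
    have hlipδ : 2 * C / r * ‖(y : EuclideanSpace ℝ (Fin p)) - z‖ ≤ gap / 4 := by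
      have h1 : 2 * C / r * ‖(y : EuclideanSpace ℝ (Fin p)) - z‖ ≤ 2 * C / r * δ := by
        apply mul_le_mul_of_nonneg_left hnorm (by positivity)
      refine h1.trans ?_
      rw [hδdef]
      rw [div_mul_div_comm, div_le_div_iff₀ (by positivity) (by norm_num)]
      ring_nf
      nlinarith
    have hlow : g xstar + gap / 2 ≤ f n z := by
      have h1 : g ↑y - gap / 4 ≤ f n ↑y := hCn y hyt
      have h2 : m - gap / 4 - gap / 4 ≤ f n z := by linarith
      have : m = g xstar + gap := by rw [hgapdef]; ring
      linarith
    have : f n xstar ≤ g xstar + gap / 4 := hDn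
    linarith
  rw [eventually_atTop] at hfinal
  obtain ⟨N, hN⟩ := hfinal
  exact ⟨N, hN⟩
end

section
/- Let T_n and T be measurable random elements of C(ℝ^p, ℝ), the space of continuous real-valued functions on ℝ^p with the topology of uniform convergence on compact sets, defined on a probability space. Assume that almost surely each T_n(ω) and T(ω) is a convex function, that T almost surely has a unique minimizer κ(ω) ∈ ℝ^p, and that for each n, κ_n(ω) is a measurable selection of minimizers of T_n(ω). If the laws of T_n converge weakly to the law of T on C(ℝ^p, ℝ), then κ_n converges in distribution to κ. -/
open MeasureTheory Filter Topology

noncomputable section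

/-- Borel σ-algebra on the space `C(ℝ^p, ℝ)` of continuous functions with the topology of
uniform convergence on compact sets (the compact-open topology). -/
instance (p : ℕ) : MeasurableSpace C(EuclideanSpace ℝ (Fin p), ℝ) := borel _

instance (p : ℕ) : BorelSpace C(EuclideanSpace ℝ (Fin p), ℝ) := ⟨rfl⟩

/-- Convergence in distribution of random elements of a topological space `E`:
weak convergence of the laws, expressed through bounded continuous test functions. -/
def TendstoInDistribution {Ω E : Type*} [MeasurableSpace Ω] [TopologicalSpace E]
    (P : Measure Ω) (X : ℕ → Ω → E) (Y : Ω → E) : Prop :=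
  ∀ f : BoundedContinuousFunction E ℝ,
    Tendsto (fun n => ∫ ω, f (X n ω) ∂P) atTop (𝓝 (∫ ω, f (Y ω) ∂P))

open Metric in
/-- A convex continuous function with a unique global minimizer `x₀ ∉ F` (for `F` closed) is not
in the closure of the set of convex continuous functions having a global minimizer in `F`. -/
lemma key_lemma {p : ℕ} {F : Set (EuclideanSpace ℝ (Fin p))} (hF : IsClosed F)
    {f : C(EuclideanSpace ℝ (Fin p), ℝ)}
    {x₀ : EuclideanSpace ℝ (Fin p)}
    (hmin : ∀ y, f x₀ ≤ f y) (huniq : ∀ x, (∀ y, f x ≤ f y) → x = x₀)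
    (hx : x₀ ∉ F) :
    f ∉ closure {g : C(EuclideanSpace ℝ (Fin p), ℝ) |
      ConvexOn ℝ Set.univ g ∧ ∃ z ∈ F, ∀ y, g z ≤ g y} := by
  intro hmem
  -- F is nonempty
  have hSne : {g : C(EuclideanSpace ℝ (Fin p), ℝ) |
      ConvexOn ℝ Set.univ g ∧ ∃ z ∈ F, ∀ y, g z ≤ g y}.Nonempty :=
    closure_nonempty_iff.mp ⟨f, hmem⟩
  obtain ⟨g₀, _, z₀, hz₀F, _⟩ := hSne
  have hFne : F.Nonempty := ⟨z₀, hz₀F⟩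
  have hδpos : 0 < infDist x₀ F := (hF.notMem_iff_infDist_pos hFne).mp hx
  set δ := infDist x₀ F with hδ
  have hz₀ne : z₀ ≠ x₀ := fun h => hx (h ▸ hz₀F)
  haveI : Nontrivial (EuclideanSpace ℝ (Fin p)) := nontrivial_of_ne z₀ x₀ hz₀ne
  -- minimum of f on the sphere
  have hsne : (sphere x₀ δ).Nonempty := NormedSpace.sphere_nonempty.mpr hδpos.le
  obtain ⟨y₀, hy₀S, hy₀min⟩ :=
    (isCompact_sphere x₀ δ).exists_isMinOn hsne f.continuous.continuousOn
  have hy₀ne : y₀ ≠ x₀ := by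
    intro h
    rw [h, mem_sphere, dist_self] at hy₀S
    exact hδpos.ne hy₀S
  set h := f y₀ - f x₀ with hh
  have hhpos : 0 < h := by
    have h1 : f x₀ ≤ f y₀ := hmin y₀
    rcases lt_or_eq_of_le h1 with hl | he
    · simpa [hh] using hl
    · exfalso
      exact hy₀ne (huniq y₀ (fun y => he ▸ hmin y))
  -- neighborhood controlling values on the closed ball
  haveI : CompactSpace (closedBall x₀ δ) :=
    isCompact_iff_compactSpace.mp (isCompact_closedBall x₀ δ)
  set R : C(EuclideanSpace ℝ (Fin p), ℝ) → C(closedBall x₀ δ, ℝ) :=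
    fun g => g.restrict (closedBall x₀ δ) with hR
  have hRcont : Continuous R := ContinuousMap.continuous_restrict _
  have hU : R ⁻¹' (ball (R f) (h/3)) ∈ 𝓝 f :=
    hRcont.continuousAt.preimage_mem_nhds (ball_mem_nhds _ (by linarith))
  obtain ⟨g, hgU, hgconv, z, hzF, hzmin⟩ :=
    mem_closure_iff_nhds.mp hmem _ hU
  -- values of g are close to f on the closed ball
  have hclose : ∀ y ∈ closedBall x₀ δ, dist (g y) (f y) < h/3 := by
    intro y hy
    have := ContinuousMap.dist_apply_le_dist (f := R g) (g := R f) ⟨y, hy⟩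
    calc dist (g y) (f y) ≤ dist (R g) (R f) := this
      _ < h/3 := hgU
  -- construct the point w on the segment from x₀ to z at distance δ
  have hdzx : δ ≤ dist x₀ z := infDist_le_dist_of_mem hzF
  have hdzpos : 0 < dist x₀ z := lt_of_lt_of_le hδpos hdzx
  set t : ℝ := δ / dist x₀ z with ht
  have htpos : 0 < t := div_pos hδpos hdzpos
  have htle : t ≤ 1 := (div_le_one hdzpos).mpr hdzx
  set w := x₀ + t • (z - x₀) with hw
  have hwd : dist w x₀ = δ := by
    rw [hw, dist_eq_norm]
    simp only [add_sub_cancel_left]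
    rw [norm_smul, Real.norm_of_nonneg htpos.le, ht]
    rw [dist_comm, dist_eq_norm] at hdzpos ⊢
    field_simp
  have hwS : w ∈ sphere x₀ δ := hwd
  have hwB : w ∈ closedBall x₀ δ := sphere_subset_closedBall hwS
  have hx₀B : x₀ ∈ closedBall x₀ δ := mem_closedBall_self hδpos.le
  -- convexity estimate: g w ≤ g x₀
  have hconvest : g w ≤ (1 - t) * g x₀ + t * g z := by
    have := hgconv.2 (Set.mem_univ x₀) (Set.mem_univ z)
      (by linarith : (0:ℝ) ≤ 1 - t) htpos.le (by ring)
    have hwe : (1 - t) • x₀ + t • z = w := by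
      rw [hw]; module
    rwa [hwe] at this
  have hgw : g w ≤ g x₀ := by
    have : g z ≤ g x₀ := hzmin x₀
    nlinarith
  -- final contradiction
  have h1 : f w ≤ g w + h/3 := by
    have := hclose w hwB
    rw [dist_comm, Real.dist_eq] at this
    have := abs_lt.mp this
    linarith [this.1]
  have h2 : g x₀ ≤ f x₀ + h/3 := by
    have := hclose x₀ hx₀B
    rw [Real.dist_eq] at this
    have := abs_lt.mp this
    linarith [this.1]
  have h3 : f y₀ ≤ f w := hy₀min hwS
  have : f x₀ + h ≤ f x₀ + 2*h/3 := by
    have : f y₀ = f x₀ + h := by rw [hh]; ring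
    linarith
  linarith

/-- Lemma 1 of the paper; Lemma 2.2 of Davis, Knight and Liu (1992).
If random convex functions `T n` converge in distribution (on `C(ℝ^p, ℝ)` with the topology of
uniform convergence on compact sets) to a random convex function `T₀` which a.s. has a unique
minimizer `κ`, and `κn n` is a measurable selection of minimizers of `T n`, then
`κn` converges in distribution to `κ`. -/
theorem tendsto_in_distribution_argmin_of_convex
    {p : ℕ} {Ω : Type*} [MeasurableSpace Ω] (P : Measure Ω) [IsProbabilityMeasure P]
    (T : ℕ → Ω → C(EuclideanSpace ℝ (Fin p), ℝ))
    (T₀ : Ω → C(EuclideanSpace ℝ (Fin p), ℝ))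
    (κn : ℕ → Ω → EuclideanSpace ℝ (Fin p)) (κ : Ω → EuclideanSpace ℝ (Fin p))
    (hTmeas : ∀ n, Measurable (T n)) (hT₀meas : Measurable T₀)
    (hκnmeas : ∀ n, Measurable (κn n)) (hκmeas : Measurable κ)
    (hTconv : ∀ n, ∀ᵐ ω ∂P, ConvexOn ℝ Set.univ (T n ω))
    (hT₀conv : ∀ᵐ ω ∂P, ConvexOn ℝ Set.univ (T₀ ω))
    (hκmin : ∀ᵐ ω ∂P, (∀ y, T₀ ω (κ ω) ≤ T₀ ω y) ∧
      ∀ x, (∀ y, T₀ ω x ≤ T₀ ω y) → x = κ ω)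
    (hκnmin : ∀ n, ∀ᵐ ω ∂P, ∀ y, T n ω (κn n ω) ≤ T n ω y)
    (hweak : TendstoInDistribution P T T₀) :
    TendstoInDistribution P κn κ := by
  -- laws as probability measures
  set ν : ℕ → ProbabilityMeasure C(EuclideanSpace ℝ (Fin p), ℝ) :=
    fun n => ⟨P.map (T n), Measure.isProbabilityMeasure_map (hTmeas n).aemeasurable⟩ with hν
  set ν₀ : ProbabilityMeasure C(EuclideanSpace ℝ (Fin p), ℝ) :=
    ⟨P.map T₀, Measure.isProbabilityMeasure_map hT₀meas.aemeasurable⟩ with hν₀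
  set μ : ℕ → ProbabilityMeasure (EuclideanSpace ℝ (Fin p)) :=
    fun n => ⟨P.map (κn n), Measure.isProbabilityMeasure_map (hκnmeas n).aemeasurable⟩ with hμ
  set μ₀ : ProbabilityMeasure (EuclideanSpace ℝ (Fin p)) :=
    ⟨P.map κ, Measure.isProbabilityMeasure_map hκmeas.aemeasurable⟩ with hμ₀
  -- weak convergence of the laws of T n
  have hνconv : Tendsto ν atTop (𝓝 ν₀) := by
    rw [ProbabilityMeasure.tendsto_iff_forall_integral_tendsto]
    intro f
    have h1 : ∀ n, ∫ x, f x ∂(ν n : Measure _) = ∫ ω, f (T n ω) ∂P := fun n =>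
      integral_map (hTmeas n).aemeasurable f.continuous.measurable.aestronglyMeasurable
    have h2 : ∫ x, f x ∂(ν₀ : Measure _) = ∫ ω, f (T₀ ω) ∂P :=
      integral_map hT₀meas.aemeasurable f.continuous.measurable.aestronglyMeasurable
    simp_rw [h1, h2]
    exact hweak f
  -- closed set estimate for the laws of κn
  have hclosed : ∀ F : Set (EuclideanSpace ℝ (Fin p)), IsClosed F →
      atTop.limsup (fun n => (μ n : Measure _) F) ≤ (μ₀ : Measure _) F := by
    intro F hF
    set S : Set C(EuclideanSpace ℝ (Fin p), ℝ) :=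
      {g | ConvexOn ℝ Set.univ g ∧ ∃ z ∈ F, ∀ y, g z ≤ g y} with hS
    set C := closure S with hC
    have hCclosed : IsClosed C := isClosed_closure
    have h1 : ∀ n, (μ n : Measure _) F ≤ (ν n : Measure _) C := by
      intro n
      show (P.map (κn n)) F ≤ (P.map (T n)) C
      rw [Measure.map_apply (hκnmeas n) hF.measurableSet,
        Measure.map_apply (hTmeas n) hCclosed.measurableSet]
      apply measure_mono_ae
      filter_upwards [hTconv n, hκnmin n] with ω hconv hmin hωF
      exact subset_closure ⟨hconv, κn n ω, hωF, hmin⟩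
    have h2 : atTop.limsup (fun n => (ν n : Measure _) C) ≤ (ν₀ : Measure _) C :=
      ProbabilityMeasure.limsup_measure_closed_le_of_tendsto hνconv hCclosed
    have h3 : (ν₀ : Measure _) C ≤ (μ₀ : Measure _) F := by
      show (P.map T₀) C ≤ (P.map κ) F
      rw [Measure.map_apply hT₀meas hCclosed.measurableSet,
        Measure.map_apply hκmeas hF.measurableSet]
      apply measure_mono_ae
      filter_upwards [hT₀conv, hκmin] with ω hconv hm hωC
      by_contra hκF
      exact key_lemma hF hm.1 hm.2 hκF hωC
    calc atTop.limsup (fun n => (μ n : Measure _) F)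
        ≤ atTop.limsup (fun n => (ν n : Measure _) C) :=
          limsup_le_limsup (Eventually.of_forall h1)
      _ ≤ (ν₀ : Measure _) C := h2
      _ ≤ (μ₀ : Measure _) F := h3
  -- weak convergence of the laws of κn via portmanteau
  have hμconv : Tendsto μ atTop (𝓝 μ₀) := by
    apply MeasureTheory.tendsto_of_forall_isOpen_le_liminf
    intro G hG
    have H : (μ₀ : Measure _) G ≤ atTop.liminf (fun n => (μ n : Measure _) G) :=
      le_measure_liminf_of_limsup_measure_compl_le hG.measurableSet
        (hclosed Gᶜ (isClosed_compl_iff.mpr hG))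
    have aux : ENNReal.ofNNReal (atTop.liminf (fun i ↦ μ i G)) =
        atTop.liminf (ENNReal.ofNNReal ∘ fun i ↦ μ i G) := by
      refine Monotone.map_liminf_of_continuousAt (F := atTop) ENNReal.coe_mono (fun i => μ i G)
        ?_ ?_ ?_
      · exact ENNReal.continuous_coe.continuousAt
      · exact IsBoundedUnder.isCoboundedUnder_ge ⟨1, by simp⟩
      · exact ⟨0, by simp⟩
    rw [← ENNReal.coe_le_coe, aux]
    simp_rw [Function.comp_def, ProbabilityMeasure.ennreal_coeFn_eq_coeFn_toMeasure]
    exact H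
  -- conclude
  intro f
  have h1 : ∀ n, ∫ x, f x ∂(μ n : Measure _) = ∫ ω, f (κn n ω) ∂P := fun n =>
    integral_map (hκnmeas n).aemeasurable f.continuous.measurable.aestronglyMeasurable
  have h2 : ∫ x, f x ∂(μ₀ : Measure _) = ∫ ω, f (κ ω) ∂P :=
    integral_map hκmeas.aemeasurable f.continuous.measurable.aestronglyMeasurable
  have := ProbabilityMeasure.tendsto_iff_forall_integral_tendsto.mp hμconv f
  simp_rw [h1, h2] at this
  exact this
end
end
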